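/- Let J ≥ 1 and let R and C be 2J×2J antisymmetric matrices (over a commutative ring, e.g. ℂ). Then Pf(R + C) = Σ_{M=0}^{J} Σ_{u ∈ I_{2M}^{2J}} sgn(u) · Pf R_{u'} · Pf C_u, where the inner sum is over all strictly increasing functions u : {1,…,2M} → {1,…,2J}. -/

import Mathlib

open Finset

noncomputable section

/-- The permutation `ι_t` of `{0,…,N-1}` induced by an increasing function
`t : Fin K → Fin N` (encoded by its image, the `K`-element set `s`): it equals `t` on the
first `K` indices, and the increasing enumeration `t'` of the complement on the rest. -/
def shuffle {N K : ℕ} (s : Finset (Fin N)) (hs : s.card = K) : Equiv.Perm (Fin N) :=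
  Equiv.ofBijective
    (fun n => if h : (n:ℕ) < K then s.orderEmbOfFin hs ⟨(n:ℕ), h⟩
      else sᶜ.orderEmbOfFin (by rw [Finset.card_compl, Fintype.card_fin, hs])
        ⟨(n:ℕ) - K, by have := n.isLt; omega⟩)
    (by
      refine Finite.injective_iff_bijective.mp ?_
      intro a b hab
      by_cases ha : (a:ℕ) < K <;> by_cases hb : (b:ℕ) < K
      · simp only [dif_pos ha, dif_pos hb] at hab
        have := (s.orderEmbOfFin hs).injective hab
        have hv : (a:ℕ) = (b:ℕ) := by simpa using this
        exact Fin.ext hv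
      · simp only [dif_pos ha, dif_neg hb] at hab
        have h1 : s.orderEmbOfFin hs ⟨(a:ℕ), ha⟩ ∈ s := Finset.orderEmbOfFin_mem s hs _
        have h2 := Finset.orderEmbOfFin_mem sᶜ
          (by rw [Finset.card_compl, Fintype.card_fin, hs])
          ⟨(b:ℕ) - K, by have := b.isLt; omega⟩
        rw [hab] at h1
        exact absurd h1 (Finset.mem_compl.mp h2)
      · simp only [dif_neg ha, dif_pos hb] at hab
        have h1 : s.orderEmbOfFin hs ⟨(b:ℕ), hb⟩ ∈ s := Finset.orderEmbOfFin_mem s hs _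
        have h2 := Finset.orderEmbOfFin_mem sᶜ
          (by rw [Finset.card_compl, Fintype.card_fin, hs])
          ⟨(a:ℕ) - K, by have := a.isLt; omega⟩
        rw [← hab] at h1
        exact absurd h1 (Finset.mem_compl.mp h2)
      · simp only [dif_neg ha, dif_neg hb] at hab
        have := (sᶜ.orderEmbOfFin
          (by rw [Finset.card_compl, Fintype.card_fin, hs])).injective hab
        have hv : (a:ℕ) - K = (b:ℕ) - K := by simpa using this
        exact Fin.ext (by omega))

end

open Equiv Equiv.Perm


lemma prod_orderEmbOfFin' {α β : Type*} [LinearOrder α] [CommMonoid β] (s : Finset α) {M : ℕ}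
    (h : s.card = M) (f : α → β) : ∏ i : Fin M, f (s.orderEmbOfFin h i) = ∏ x ∈ s, f x := by
  have himg : Finset.image (s.orderEmbOfFin h) Finset.univ = s := by
    ext x
    simp only [Finset.mem_image, Finset.mem_univ, true_and]
    constructor
    · rintro ⟨i, rfl⟩; exact Finset.orderEmbOfFin_mem s h i
    · intro hx
      have := Finset.range_orderEmbOfFin s h
      have : x ∈ Set.range (s.orderEmbOfFin h) := this ▸ hx
      obtain ⟨i, hi⟩ := this
      exact ⟨i, hi⟩
  conv_rhs => rw [← himg]
  rw [Finset.prod_image (fun a _ b _ hab => (s.orderEmbOfFin h).injective hab)]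

lemma shuffle_apply_lt {N K : ℕ} (s : Finset (Fin N)) (hs : s.card = K) (n : Fin N)
    (h : (n:ℕ) < K) : shuffle s hs n = s.orderEmbOfFin hs ⟨(n:ℕ), h⟩ := by
  simp only [shuffle, Equiv.ofBijective_apply, dif_pos h]

lemma shuffle_apply_ge {N K : ℕ} (s : Finset (Fin N)) (hs : s.card = K) (n : Fin N)
    (h : ¬ (n:ℕ) < K) :
    shuffle s hs n = sᶜ.orderEmbOfFin (by rw [Finset.card_compl, Fintype.card_fin, hs])
      ⟨(n:ℕ) - K, by have := n.isLt; omega⟩ := by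
  simp only [shuffle, Equiv.ofBijective_apply, dif_neg h]

lemma shuffle_mem_iff {N K : ℕ} (s : Finset (Fin N)) (hs : s.card = K) (n : Fin N) :
    shuffle s hs n ∈ s ↔ (n:ℕ) < K := by
  by_cases h : (n:ℕ) < K
  · simp only [h, iff_true, shuffle_apply_lt s hs n h]
    exact Finset.orderEmbOfFin_mem s hs _
  · simp only [h, iff_false, shuffle_apply_ge s hs n h]
    have := Finset.orderEmbOfFin_mem sᶜ
      (by rw [Finset.card_compl, Fintype.card_fin, hs] :
        sᶜ.card = N - K) ⟨(n:ℕ) - K, by have := n.isLt; omega⟩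
    exact Finset.mem_compl.mp this

section Blow
variable {J : ℕ}

def blow (g : Perm (Fin J)) : Perm (Fin (2*J)) :=
  (finCongr (mul_comm J 2) : Fin (J*2) ≃ Fin (2*J)).permCongr
    (finProdFinEquiv.permCongr ((g.prodCongr (Equiv.refl (Fin 2))) : Perm (Fin J × Fin 2)))

lemma sign_blow (g : Perm (Fin J)) : Equiv.Perm.sign (blow g) = 1 := by
  unfold blow
  rw [sign_permCongr, sign_permCongr, Equiv.prodCongr_refl_right, sign_prodCongrLeft]
  simp [Finset.prod_const, Int.units_sq]

lemma blow_apply (g : Perm (Fin J)) (j : Fin J) (r : Fin 2) (h : 2*(j:ℕ)+(r:ℕ) < 2*J)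
    (h' : 2*((g j):ℕ)+(r:ℕ) < 2*J) :
    blow g ⟨2*(j:ℕ)+(r:ℕ), h⟩ = ⟨2*((g j):ℕ)+(r:ℕ), h'⟩ := by
  have key : finProdFinEquiv.symm (⟨2*(j:ℕ)+(r:ℕ), by omega⟩ : Fin (J*2)) = (j, r) := by
    rw [Equiv.symm_apply_eq]
    apply Fin.ext
    simp [finProdFinEquiv]
    omega
  apply Fin.ext
  simp only [blow, Equiv.permCongr_apply, finCongr_symm, finCongr_apply, Fin.coe_cast]
  have : (Fin.cast (mul_comm 2 J) (⟨2*(j:ℕ)+(r:ℕ), h⟩ : Fin (2*J)) : Fin (J*2))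
      = ⟨2*(j:ℕ)+(r:ℕ), by omega⟩ := rfl
  rw [this, key]
  simp [finProdFinEquiv, Equiv.prodCongr_apply]
  omega

section Glue
variable (J M : ℕ)

def eSplit (hM : M ≤ J) : Fin (2*M) ⊕ Fin (2*(J-M)) ≃ Fin (2*J) :=
  finSumFinEquiv.trans (finCongr (by omega))

lemma eSplit_inl (hM : M ≤ J) (i : Fin (2*M)) (h : (i:ℕ) < 2*J) :
    eSplit J M hM (Sum.inl i) = ⟨(i:ℕ), h⟩ := by
  apply Fin.ext; simp [eSplit]

lemma eSplit_inr (hM : M ≤ J) (i : Fin (2*(J-M))) (h : 2*M + (i:ℕ) < 2*J) :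
    eSplit J M hM (Sum.inr i) = ⟨2*M + (i:ℕ), h⟩ := by
  apply Fin.ext; simp [eSplit]

def glue (hM : M ≤ J) (ρ : Perm (Fin (2*M))) (π : Perm (Fin (2*(J-M)))) : Perm (Fin (2*J)) :=
  (eSplit J M hM).permCongr (Equiv.sumCongr ρ π)

lemma sign_glue (hM : M ≤ J) (ρ : Perm (Fin (2*M))) (π : Perm (Fin (2*(J-M)))) :
    Equiv.Perm.sign (glue J M hM ρ π) = Equiv.Perm.sign ρ * Equiv.Perm.sign π := by
  unfold glue
  rw [sign_permCongr, sign_sumCongr]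

lemma glue_apply_lt (hM : M ≤ J) (ρ : Perm (Fin (2*M))) (π : Perm (Fin (2*(J-M))))
    (n : Fin (2*J)) (h : (n:ℕ) < 2*M) :
    glue J M hM ρ π n = ⟨((ρ ⟨(n:ℕ), h⟩ : Fin (2*M)) : ℕ),
      by have := (ρ ⟨(n:ℕ), h⟩).isLt; omega⟩ := by
  have hsymm : (eSplit J M hM).symm n = Sum.inl ⟨(n:ℕ), h⟩ := by
    rw [Equiv.symm_apply_eq, eSplit_inl J M hM _ n.isLt]
  simp only [glue, Equiv.permCongr_apply, hsymm, Equiv.sumCongr_apply, Sum.map_inl]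
  exact eSplit_inl J M hM _ _

lemma glue_apply_ge (hM : M ≤ J) (ρ : Perm (Fin (2*M))) (π : Perm (Fin (2*(J-M))))
    (n : Fin (2*J)) (h : ¬ (n:ℕ) < 2*M) :
    glue J M hM ρ π n = ⟨2*M + ((π ⟨(n:ℕ) - 2*M, by have := n.isLt; omega⟩ : Fin (2*(J-M))) : ℕ),
      by have := (π ⟨(n:ℕ) - 2*M, by have := n.isLt; omega⟩).isLt; omega⟩ := by
  have hsymm : (eSplit J M hM).symm n = Sum.inr ⟨(n:ℕ) - 2*M, by have := n.isLt; omega⟩ := by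
    rw [Equiv.symm_apply_eq, eSplit_inr J M hM _ (by have := n.isLt; omega)]
    apply Fin.ext; simp; omega
  simp only [glue, Equiv.permCongr_apply, hsymm, Equiv.sumCongr_apply, Sum.map_inr]
  exact eSplit_inr J M hM _ _

end Glue

section Phi
variable (J M : ℕ)

lemma card_filter_lt (N K : ℕ) (hK : K ≤ N) :
    (Finset.univ.filter fun n : Fin N => (n:ℕ) < K).card = K := by
  have himg : (Finset.univ.filter fun n : Fin N => (n:ℕ) < K)
      = Finset.image (Fin.castLE hK) Finset.univ := by
    ext n
    simp only [Finset.mem_filter, Finset.mem_univ, true_and, Finset.mem_image]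
    constructor
    · intro h; exact ⟨⟨(n:ℕ), h⟩, Fin.ext rfl⟩
    · rintro ⟨m, rfl⟩; exact m.isLt
  rw [himg, Finset.card_image_of_injective _ (Fin.castLE_injective hK), Finset.card_univ,
    Fintype.card_fin]

noncomputable def phiFun (hM : M ≤ J) :
    ({s : Finset (Fin (2*J)) // s ∈ Finset.powersetCard (2*M) Finset.univ} ×
      Perm (Fin (2*M)) × Perm (Fin (2*(J-M)))) → Perm (Fin (2*J)) :=
  fun x => shuffle x.1.1 ((Finset.mem_powersetCard.mp x.1.2).2) * glue J M hM x.2.1 x.2.2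

lemma phi_image_low (hM : M ≤ J) (x) :
    (Finset.univ.filter fun n : Fin (2*J) => (n:ℕ) < 2*M).image (phiFun J M hM x) = x.1.1 := by
  obtain ⟨⟨s, hs⟩, ρ, π⟩ := x
  have hscard : s.card = 2*M := (Finset.mem_powersetCard.mp hs).2
  apply Finset.eq_of_subset_of_card_le
  · intro z hz
    obtain ⟨n, hn, rfl⟩ := Finset.mem_image.mp hz
    have hn' : (n:ℕ) < 2*M := (Finset.mem_filter.mp hn).2
    show shuffle s hscard (glue J M hM ρ π n) ∈ s
    rw [glue_apply_lt J M hM ρ π n hn']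
    rw [shuffle_mem_iff]
    exact (ρ ⟨(n:ℕ), hn'⟩).isLt
  · rw [Finset.card_image_of_injective _ (phiFun J M hM ⟨⟨s, hs⟩, ρ, π⟩).injective,
      card_filter_lt _ _ (by omega), hscard]

lemma phiFun_injective (hM : M ≤ J) : Function.Injective (phiFun J M hM) := by
  rintro ⟨⟨s, hs⟩, ρ, π⟩ ⟨⟨s', hs'⟩, ρ', π'⟩ h
  have hss : s = s' := by
    have h1 := phi_image_low J M hM ⟨⟨s, hs⟩, ρ, π⟩
    have h2 := phi_image_low J M hM ⟨⟨s', hs'⟩, ρ', π'⟩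
    simp only at h1 h2
    rw [← h1, ← h2, h]
  subst hss
  have hglue : glue J M hM ρ π = glue J M hM ρ' π' :=
    mul_left_cancel (a := shuffle s ((Finset.mem_powersetCard.mp hs).2)) h
  have hsum : Equiv.sumCongr ρ π = Equiv.sumCongr ρ' π' :=
    (eSplit J M hM).permCongr.injective hglue
  have hρ : ρ = ρ' := Equiv.ext fun i => by
    have := congrArg (fun e : Perm _ => e (Sum.inl i)) hsum
    simpa using this
  have hπ : π = π' := Equiv.ext fun i => by
    have := congrArg (fun e : Perm _ => e (Sum.inr i)) hsum
    simpa using this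
  subst hρ; subst hπ; rfl

lemma phiFun_bijective (hM : M ≤ J) : Function.Bijective (phiFun J M hM) := by
  rw [Fintype.bijective_iff_injective_and_card]
  refine ⟨phiFun_injective J M hM, ?_⟩
  rw [Fintype.card_prod, Fintype.card_prod, Fintype.card_coe, Fintype.card_perm,
    Fintype.card_perm, Finset.card_powersetCard, Finset.card_univ, Fintype.card_fin,
    Fintype.card_fin, Fintype.card_fin, Fintype.card_perm, Fintype.card_fin]
  have h1 : 2*(J-M) = 2*J - 2*M := by omega
  rw [h1, ← mul_assoc]
  exact Nat.choose_mul_factorial_mul_factorial (by omega)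
end Phi


open Finset Matrix

noncomputable section

/-- Pfaffian of a `2J × 2J` matrix, via the sum over the symmetric group:
`Pf U = (1/(2^J J!)) Σ_{τ∈S_{2J}} sgn(τ) ∏_{j=1}^J U[τ(2j−1),τ(2j)]`
(for a `0 × 0` matrix this gives `Pf = 1`). -/
def pf {R : Type*} [Field R] {J : ℕ} (U : Matrix (Fin (2*J)) (Fin (2*J)) R) : R :=
  ((2:R)^J * (Nat.factorial J : R))⁻¹ *
    ∑ τ : Equiv.Perm (Fin (2*J)), ((Equiv.Perm.sign τ : ℤ) : R) *
      ∏ j : Fin J, U (τ ⟨2*(j:ℕ), by have := j.isLt; omega⟩)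
                     (τ ⟨2*(j:ℕ)+1, by have := j.isLt; omega⟩)

/-- The summand `sgn(u) · Pf R_{u'} · Pf C_u` attached to an element `u ∈ I_{2M}^{2J}`
(encoded by its image, the `2M`-element subset `s` of `{0,…,2J−1}`, with
`u = s.orderEmbOfFin`, `u' = sᶜ.orderEmbOfFin`, and `sgn(u)` the sign of the induced
"shuffle" permutation `ι_u`). -/
def pfSummand {J : ℕ} (R C : Matrix (Fin (2*J)) (Fin (2*J)) ℂ) (M : ℕ)
    (s : Finset (Fin (2*J))) (hs : s.card = 2*M) : ℂ :=
  ((Equiv.Perm.sign (shuffle s hs) : ℤ) : ℂ) *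
    pf (fun j k : Fin (2*(J-M)) =>
      R (sᶜ.orderEmbOfFin (by rw [Finset.card_compl, Fintype.card_fin, hs]; omega) j)
        (sᶜ.orderEmbOfFin (by rw [Finset.card_compl, Fintype.card_fin, hs]; omega) k)) *
    pf (fun j k : Fin (2*M) => C (s.orderEmbOfFin hs j) (s.orderEmbOfFin hs k))


open Equiv Equiv.Perm

lemma pf_sum {M : ℕ} (U : Matrix (Fin (2*M)) (Fin (2*M)) ℂ) :
    ∑ τ : Perm (Fin (2*M)), ((Equiv.Perm.sign τ : ℤ) : ℂ) *
      ∏ j : Fin M, U (τ ⟨2*(j:ℕ), by have := j.isLt; omega⟩)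
                     (τ ⟨2*(j:ℕ)+1, by have := j.isLt; omega⟩)
    = (2:ℂ)^M * (Nat.factorial M : ℂ) * pf U := by
  rw [pf, mul_inv_cancel_left₀]
  exact mul_ne_zero (pow_ne_zero _ two_ne_zero) (Nat.cast_ne_zero.mpr (Nat.factorial_ne_zero M))

lemma blow_apply0 {J : ℕ} (g : Perm (Fin J)) (j : Fin J) (h : 2*(j:ℕ) < 2*J)
    (h' : 2*((g j):ℕ) < 2*J) : blow g ⟨2*(j:ℕ), h⟩ = ⟨2*((g j):ℕ), h'⟩ := by
  have h1 : (⟨2*(j:ℕ), h⟩ : Fin (2*J)) = ⟨2*(j:ℕ)+((0:Fin 2):ℕ), by omega⟩ := Fin.ext (by simp)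
  rw [h1, blow_apply g j 0 _ (by omega)]
  exact Fin.ext (by simp)

lemma blow_apply1 {J : ℕ} (g : Perm (Fin J)) (j : Fin J) (h : 2*(j:ℕ)+1 < 2*J)
    (h' : 2*((g j):ℕ)+1 < 2*J) : blow g ⟨2*(j:ℕ)+1, h⟩ = ⟨2*((g j):ℕ)+1, h'⟩ := by
  have h1 : (⟨2*(j:ℕ)+1, h⟩ : Fin (2*J)) = ⟨2*(j:ℕ)+((1:Fin 2):ℕ), by omega⟩ := Fin.ext (by simp)
  rw [h1, blow_apply g j 1 _ (by omega)]
  exact Fin.ext (by simp)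

set_option maxHeartbeats 1600000 in
lemma SM_eq (J M : ℕ) (hM : M ≤ J) (R C : Matrix (Fin (2*J)) (Fin (2*J)) ℂ) :
    (∑ τ : Perm (Fin (2*J)), ((Equiv.Perm.sign τ : ℤ) : ℂ) *
      (∏ i : Fin M, C (τ ⟨2*(i:ℕ), by have := i.isLt; omega⟩)
          (τ ⟨2*(i:ℕ)+1, by have := i.isLt; omega⟩)) *
      (∏ i : Fin (J-M), R (τ ⟨2*(M+(i:ℕ)), by have := i.isLt; omega⟩)
          (τ ⟨2*(M+(i:ℕ))+1, by have := i.isLt; omega⟩)))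
    = ((2:ℂ)^M * (Nat.factorial M : ℂ)) * ((2:ℂ)^(J-M) * (Nat.factorial (J-M) : ℂ)) *
      ∑ s ∈ (Finset.powersetCard (2*M) (Finset.univ : Finset (Fin (2*J)))).attach,
        pfSummand R C M s.1 ((Finset.mem_powersetCard.mp s.2).2) := by
  classical
  set F : Perm (Fin (2*J)) → ℂ := fun τ => ((Equiv.Perm.sign τ : ℤ) : ℂ) *
      (∏ i : Fin M, C (τ ⟨2*(i:ℕ), by have := i.isLt; omega⟩)
          (τ ⟨2*(i:ℕ)+1, by have := i.isLt; omega⟩)) *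
      (∏ i : Fin (J-M), R (τ ⟨2*(M+(i:ℕ)), by have := i.isLt; omega⟩)
          (τ ⟨2*(M+(i:ℕ))+1, by have := i.isLt; omega⟩)) with hF
  have h1 : ∑ τ : Perm (Fin (2*J)), F τ
      = ∑ x : ({s : Finset (Fin (2*J)) // s ∈ Finset.powersetCard (2*M) Finset.univ} ×
          Perm (Fin (2*M)) × Perm (Fin (2*(J-M)))), F (phiFun J M hM x) :=
    (Fintype.sum_bijective (phiFun J M hM) (phiFun_bijective J M hM)
      (fun x => F (phiFun J M hM x)) F (fun x => rfl)).symm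
  rw [h1, Fintype.sum_prod_type]
  have h2 : ∀ (s : {s : Finset (Fin (2*J)) // s ∈ Finset.powersetCard (2*M) Finset.univ}),
      ∑ y : Perm (Fin (2*M)) × Perm (Fin (2*(J-M))), F (phiFun J M hM (s, y))
      = ((2:ℂ)^M * (Nat.factorial M : ℂ)) * ((2:ℂ)^(J-M) * (Nat.factorial (J-M) : ℂ)) *
        pfSummand R C M s.1 ((Finset.mem_powersetCard.mp s.2).2) := by
    rintro ⟨s, hsmem⟩
    set hs := (Finset.mem_powersetCard.mp hsmem).2 with hhs
    have hsc : sᶜ.card = 2*(J-M) := by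
      rw [Finset.card_compl, Fintype.card_fin, hs]; omega
    rw [Fintype.sum_prod_type]
    have key : ∀ (ρ : Perm (Fin (2*M))) (π : Perm (Fin (2*(J-M)))),
        F (phiFun J M hM (⟨s, hsmem⟩, ρ, π))
        = ((Equiv.Perm.sign (shuffle s hs) : ℤ) : ℂ) *
          ((((Equiv.Perm.sign ρ : ℤ) : ℂ) *
            ∏ i : Fin M, C (s.orderEmbOfFin hs (ρ ⟨2*(i:ℕ), by have := i.isLt; omega⟩))
              (s.orderEmbOfFin hs (ρ ⟨2*(i:ℕ)+1, by have := i.isLt; omega⟩))) *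
          ((((Equiv.Perm.sign π : ℤ) : ℂ)) *
            ∏ i : Fin (J-M),
              R (sᶜ.orderEmbOfFin hsc (π ⟨2*(i:ℕ), by have := i.isLt; omega⟩))
                (sᶜ.orderEmbOfFin hsc (π ⟨2*(i:ℕ)+1, by have := i.isLt; omega⟩)))) := by
      intro ρ π
      have happlow : ∀ (v : ℕ) (hv : v < 2*M) (hv' : v < 2*J),
          (phiFun J M hM (⟨s, hsmem⟩, ρ, π)) ⟨v, hv'⟩
            = s.orderEmbOfFin hs (ρ ⟨v, hv⟩) := by
        intro v hv hv'
        show (shuffle s hs) (glue J M hM ρ π ⟨v, hv'⟩) = _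
        rw [glue_apply_lt J M hM ρ π _ hv,
          shuffle_apply_lt s hs _ (by exact (ρ ⟨v, hv⟩).isLt)]
      have happhigh : ∀ (v : ℕ) (hv : 2*M ≤ v) (hv' : v < 2*J),
          (phiFun J M hM (⟨s, hsmem⟩, ρ, π)) ⟨v, hv'⟩
            = sᶜ.orderEmbOfFin hsc (π ⟨v - 2*M, by omega⟩) := by
        intro v hv hv'
        show (shuffle s hs) (glue J M hM ρ π ⟨v, hv'⟩) = _
        rw [glue_apply_ge J M hM ρ π _ (by show ¬ v < 2*M; omega)]
        rw [shuffle_apply_ge s hs _ (by show ¬ 2*M + _ < 2*M; omega)]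
        have hidx : (⟨2*M + ((π ⟨v - 2*M, by omega⟩ : Fin (2*(J-M))) : ℕ) - 2*M,
              by have := (π ⟨v - 2*M, by omega⟩ : Fin (2*(J-M))).isLt; omega⟩ : Fin (2*(J-M)))
            = π ⟨v - 2*M, by omega⟩ := Fin.ext (Nat.add_sub_cancel_left _ _)
        exact congrArg (fun z => sᶜ.orderEmbOfFin hsc z) hidx
      have hsgn : ((Equiv.Perm.sign (phiFun J M hM (⟨s, hsmem⟩, ρ, π)) : ℤ) : ℂ)
          = ((Equiv.Perm.sign (shuffle s hs) : ℤ) : ℂ) *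
            (((Equiv.Perm.sign ρ : ℤ) : ℂ) * ((Equiv.Perm.sign π : ℤ) : ℂ)) := by
        show (((Equiv.Perm.sign (shuffle s hs * glue J M hM ρ π)) : ℤ) : ℂ) = _
        rw [_root_.map_mul, sign_glue]
        push_cast [Units.val_mul]
        ring
      have hCprod : (∏ i : Fin M,
            C ((phiFun J M hM (⟨s, hsmem⟩, ρ, π)) ⟨2*(i:ℕ), by have := i.isLt; omega⟩)
              ((phiFun J M hM (⟨s, hsmem⟩, ρ, π)) ⟨2*(i:ℕ)+1, by have := i.isLt; omega⟩))
          = ∏ i : Fin M, C (s.orderEmbOfFin hs (ρ ⟨2*(i:ℕ), by have := i.isLt; omega⟩))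
              (s.orderEmbOfFin hs (ρ ⟨2*(i:ℕ)+1, by have := i.isLt; omega⟩)) :=
        Finset.prod_congr rfl (fun i _ => by
          rw [happlow (2*(i:ℕ)) (by have := i.isLt; omega) (by have := i.isLt; omega),
              happlow (2*(i:ℕ)+1) (by have := i.isLt; omega) (by have := i.isLt; omega)])
      have hRprod : (∏ i : Fin (J-M),
            R ((phiFun J M hM (⟨s, hsmem⟩, ρ, π)) ⟨2*(M+(i:ℕ)), by have := i.isLt; omega⟩)
              ((phiFun J M hM (⟨s, hsmem⟩, ρ, π)) ⟨2*(M+(i:ℕ))+1, by have := i.isLt; omega⟩))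
          = ∏ i : Fin (J-M),
              R (sᶜ.orderEmbOfFin hsc (π ⟨2*(i:ℕ), by have := i.isLt; omega⟩))
                (sᶜ.orderEmbOfFin hsc (π ⟨2*(i:ℕ)+1, by have := i.isLt; omega⟩)) :=
        Finset.prod_congr rfl (fun i _ => by
          rw [happhigh (2*(M+(i:ℕ))) (by omega) (by have := i.isLt; omega),
              happhigh (2*(M+(i:ℕ))+1) (by omega) (by have := i.isLt; omega)]
          have e1 : (⟨2*(M+(i:ℕ)) - 2*M, by omega⟩ : Fin (2*(J-M)))
              = ⟨2*(i:ℕ), by have := i.isLt; omega⟩ :=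
            Fin.ext (by show 2*(M+(i:ℕ)) - 2*M = 2*(i:ℕ); omega)
          have e2 : (⟨2*(M+(i:ℕ))+1 - 2*M, by omega⟩ : Fin (2*(J-M)))
              = ⟨2*(i:ℕ)+1, by have := i.isLt; omega⟩ :=
            Fin.ext (by show 2*(M+(i:ℕ))+1 - 2*M = 2*(i:ℕ)+1; omega)
          rw [e1, e2])
      simp only [hF]
      rw [hsgn, hCprod, hRprod]
      ring
    rw [Finset.sum_congr rfl (fun ρ _ => Finset.sum_congr rfl (fun π _ => key ρ π))]
    simp only [← Finset.mul_sum]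
    rw [← Finset.sum_mul]
    have hA : (∑ ρ : Perm (Fin (2*M)), ((Equiv.Perm.sign ρ : ℤ) : ℂ) *
          ∏ i : Fin M, C (s.orderEmbOfFin hs (ρ ⟨2*(i:ℕ), by have := i.isLt; omega⟩))
            (s.orderEmbOfFin hs (ρ ⟨2*(i:ℕ)+1, by have := i.isLt; omega⟩)))
        = (2:ℂ)^M * (Nat.factorial M : ℂ) *
          pf (fun j k : Fin (2*M) => C (s.orderEmbOfFin hs j) (s.orderEmbOfFin hs k)) :=
      pf_sum (fun j k : Fin (2*M) => C (s.orderEmbOfFin hs j) (s.orderEmbOfFin hs k))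
    have hB : (∑ π : Perm (Fin (2*(J-M))), ((Equiv.Perm.sign π : ℤ) : ℂ) *
          ∏ i : Fin (J-M),
            R (sᶜ.orderEmbOfFin hsc (π ⟨2*(i:ℕ), by have := i.isLt; omega⟩))
              (sᶜ.orderEmbOfFin hsc (π ⟨2*(i:ℕ)+1, by have := i.isLt; omega⟩)))
        = (2:ℂ)^(J-M) * (Nat.factorial (J-M) : ℂ) *
          pf (fun j k : Fin (2*(J-M)) => R (sᶜ.orderEmbOfFin hsc j) (sᶜ.orderEmbOfFin hsc k)) :=
      pf_sum (fun j k : Fin (2*(J-M)) => R (sᶜ.orderEmbOfFin hsc j) (sᶜ.orderEmbOfFin hsc k))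
    rw [hA, hB, pfSummand]
    ring
  rw [Finset.sum_congr rfl (fun s _ => h2 s), ← Finset.univ_eq_attach, Finset.mul_sum]

set_option maxHeartbeats 1600000 in
lemma sumT (J M : ℕ) (hM : M ≤ J) (R C : Matrix (Fin (2*J)) (Fin (2*J)) ℂ)
    (T : Finset (Fin J)) (hT : T.card = M) :
    (∑ τ : Perm (Fin (2*J)), ((Equiv.Perm.sign τ : ℤ) : ℂ) *
      ((∏ j ∈ T, C (τ ⟨2*(j:ℕ), by have := j.isLt; omega⟩)
          (τ ⟨2*(j:ℕ)+1, by have := j.isLt; omega⟩)) *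
       (∏ j ∈ Finset.univ \ T, R (τ ⟨2*(j:ℕ), by have := j.isLt; omega⟩)
          (τ ⟨2*(j:ℕ)+1, by have := j.isLt; omega⟩))))
    = (∑ τ : Perm (Fin (2*J)), ((Equiv.Perm.sign τ : ℤ) : ℂ) *
      (∏ i : Fin M, C (τ ⟨2*(i:ℕ), by have := i.isLt; omega⟩)
          (τ ⟨2*(i:ℕ)+1, by have := i.isLt; omega⟩)) *
      (∏ i : Fin (J-M), R (τ ⟨2*(M+(i:ℕ)), by have := i.isLt; omega⟩)
          (τ ⟨2*(M+(i:ℕ))+1, by have := i.isLt; omega⟩))) := by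
  classical
  have hTc : Tᶜ.card = J - M := by
    rw [Finset.card_compl, Fintype.card_fin, hT]
  set g : Perm (Fin J) := (shuffle T hT)⁻¹ with hg
  have hg1 : ∀ i : Fin M, g (T.orderEmbOfFin hT i) = ⟨(i:ℕ), by have := i.isLt; omega⟩ := by
    intro i
    rw [hg, Equiv.Perm.inv_eq_iff_eq,
      shuffle_apply_lt T hT ⟨(i:ℕ), by have := i.isLt; omega⟩ i.isLt]
  have hg2 : ∀ i : Fin (J-M), g (Tᶜ.orderEmbOfFin hTc i)
      = ⟨M + (i:ℕ), by have := i.isLt; omega⟩ := by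
    intro i
    rw [hg, Equiv.Perm.inv_eq_iff_eq,
      shuffle_apply_ge T hT ⟨M + (i:ℕ), by have := i.isLt; omega⟩ (by show ¬ M + _ < M; omega)]
    refine congrArg _ (Fin.ext ?_)
    show (i:ℕ) = M + (i:ℕ) - M
    omega
  refine (Fintype.sum_equiv (Equiv.mulRight (blow g)) _ _ ?_).symm
  intro τ
  simp only [Equiv.coe_mulRight]
  have hsgn : ((Equiv.Perm.sign (τ * blow g) : ℤ) : ℂ) = ((Equiv.Perm.sign τ : ℤ) : ℂ) := by
    rw [_root_.map_mul, sign_blow]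
    push_cast [Units.val_mul]
    ring
  have happ0 : ∀ (j : Fin J), (τ * blow g) ⟨2*(j:ℕ), by have := j.isLt; omega⟩
      = τ ⟨2*((g j):ℕ), by have := (g j).isLt; omega⟩ := by
    intro j
    show τ (blow g ⟨2*(j:ℕ), _⟩) = _
    rw [blow_apply0 g j _ (by have := (g j).isLt; omega)]
  have happ1 : ∀ (j : Fin J), (τ * blow g) ⟨2*(j:ℕ)+1, by have := j.isLt; omega⟩
      = τ ⟨2*((g j):ℕ)+1, by have := (g j).isLt; omega⟩ := by
    intro j
    show τ (blow g ⟨2*(j:ℕ)+1, _⟩) = _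
    rw [blow_apply1 g j _ (by have := (g j).isLt; omega)]
  show _ = ((Equiv.Perm.sign (τ * blow g) : ℤ) : ℂ) * _
  rw [hsgn]
  have hCprod : (∏ j ∈ T, C ((τ * blow g) ⟨2*(j:ℕ), by have := j.isLt; omega⟩)
        ((τ * blow g) ⟨2*(j:ℕ)+1, by have := j.isLt; omega⟩))
      = ∏ i : Fin M, C (τ ⟨2*(i:ℕ), by have := i.isLt; omega⟩)
          (τ ⟨2*(i:ℕ)+1, by have := i.isLt; omega⟩) := by
    rw [← prod_orderEmbOfFin' T hT]
    refine Finset.prod_congr rfl (fun i _ => ?_)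
    rw [happ0, happ1]
    simp only [hg1 i, Fin.val_mk]
  have hRprod : (∏ j ∈ Finset.univ \ T, R ((τ * blow g) ⟨2*(j:ℕ), by have := j.isLt; omega⟩)
        ((τ * blow g) ⟨2*(j:ℕ)+1, by have := j.isLt; omega⟩))
      = ∏ i : Fin (J-M), R (τ ⟨2*(M+(i:ℕ)), by have := i.isLt; omega⟩)
          (τ ⟨2*(M+(i:ℕ))+1, by have := i.isLt; omega⟩) := by
    rw [← Finset.compl_eq_univ_sdiff, ← prod_orderEmbOfFin' Tᶜ hTc]
    refine Finset.prod_congr rfl (fun i _ => ?_)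
    rw [happ0, happ1]
    simp only [hg2 i, Fin.val_mk]
  rw [← hCprod, ← hRprod]
  ring


set_option maxHeartbeats 1600000 in
/-- **Lemma 8.7 (Sinclair).**  For `2J × 2J` antisymmetric matrices `R` and `C`,
`Pf(R+C) = Σ_{M=0}^J Σ_{u ∈ I_{2M}^{2J}} sgn(u) Pf R_{u'} Pf C_u`. -/
theorem pf_add_expansion (J : ℕ) (hJ : 1 ≤ J)
    (R C : Matrix (Fin (2*J)) (Fin (2*J)) ℂ) (hR : Rᵀ = -R) (hC : Cᵀ = -C) :
    pf (R + C) = ∑ M ∈ Finset.range (J+1),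
      ∑ s ∈ (Finset.powersetCard (2*M) (Finset.univ : Finset (Fin (2*J)))).attach,
        pfSummand R C M s.1 ((Finset.mem_powersetCard.mp s.2).2) := by
  classical
  rw [pf]
  have hexp : ∀ τ : Perm (Fin (2*J)),
      (∏ j : Fin J, (R + C) (τ ⟨2*(j:ℕ), by have := j.isLt; omega⟩)
        (τ ⟨2*(j:ℕ)+1, by have := j.isLt; omega⟩))
      = ∑ T ∈ (Finset.univ : Finset (Fin J)).powerset,
          (∏ j ∈ T, C (τ ⟨2*(j:ℕ), by have := j.isLt; omega⟩)
            (τ ⟨2*(j:ℕ)+1, by have := j.isLt; omega⟩)) *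
          (∏ j ∈ Finset.univ \ T, R (τ ⟨2*(j:ℕ), by have := j.isLt; omega⟩)
            (τ ⟨2*(j:ℕ)+1, by have := j.isLt; omega⟩)) := by
    intro τ
    rw [← Finset.prod_add]
    exact Finset.prod_congr rfl (fun j _ => by rw [Matrix.add_apply]; ring)
  rw [Finset.sum_congr rfl (fun τ _ => by rw [hexp τ, Finset.mul_sum])]
  rw [Finset.sum_comm]
  rw [Finset.sum_powerset]
  simp only [Finset.card_univ, Fintype.card_fin]
  rw [Finset.mul_sum]
  refine Finset.sum_congr rfl (fun M hMmem => ?_)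
  have hM : M ≤ J := by
    have := Finset.mem_range.mp hMmem; omega
  have hinner : ∀ T ∈ Finset.powersetCard M (Finset.univ : Finset (Fin J)),
      (∑ τ : Perm (Fin (2*J)), ((Equiv.Perm.sign τ : ℤ) : ℂ) *
        ((∏ j ∈ T, C (τ ⟨2*(j:ℕ), by have := j.isLt; omega⟩)
            (τ ⟨2*(j:ℕ)+1, by have := j.isLt; omega⟩)) *
         (∏ j ∈ Finset.univ \ T, R (τ ⟨2*(j:ℕ), by have := j.isLt; omega⟩)
            (τ ⟨2*(j:ℕ)+1, by have := j.isLt; omega⟩))))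
      = ((2:ℂ)^M * (Nat.factorial M : ℂ)) * ((2:ℂ)^(J-M) * (Nat.factorial (J-M) : ℂ)) *
        ∑ s ∈ (Finset.powersetCard (2*M) (Finset.univ : Finset (Fin (2*J)))).attach,
          pfSummand R C M s.1 ((Finset.mem_powersetCard.mp s.2).2) := by
    intro T hT
    rw [sumT J M hM R C T (Finset.mem_powersetCard.mp hT).2, SM_eq J M hM R C]
  rw [Finset.sum_congr rfl hinner, Finset.sum_const, Finset.card_powersetCard,
    Finset.card_univ, Fintype.card_fin, nsmul_eq_mul]
  have hne : ((2:ℂ)^J * (Nat.factorial J : ℂ)) ≠ 0 :=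
    mul_ne_zero (pow_ne_zero _ two_ne_zero) (Nat.cast_ne_zero.mpr (Nat.factorial_ne_zero J))
  have h2 : (2:ℂ)^M * (2:ℂ)^(J-M) = (2:ℂ)^J := by
    rw [← pow_add]; congr 1; omega
  have hh := Nat.choose_mul_factorial_mul_factorial hM
  have hfac : ((J.choose M : ℕ) : ℂ) * ((2:ℂ)^M * (Nat.factorial M : ℂ)) *
      ((2:ℂ)^(J-M) * (Nat.factorial (J-M) : ℂ)) = (2:ℂ)^J * (Nat.factorial J : ℂ) := by
    calc ((J.choose M : ℕ) : ℂ) * ((2:ℂ)^M * (Nat.factorial M : ℂ)) *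
        ((2:ℂ)^(J-M) * (Nat.factorial (J-M) : ℂ))
        = ((2:ℂ)^M * (2:ℂ)^(J-M)) *
          (((J.choose M : ℕ) : ℂ) * (Nat.factorial M : ℂ) * (Nat.factorial (J-M) : ℂ)) := by
          ring
      _ = (2:ℂ)^J * (((J.choose M * Nat.factorial M * Nat.factorial (J-M) : ℕ)) : ℂ) := by
          rw [h2]; push_cast; ring
      _ = (2:ℂ)^J * (Nat.factorial J : ℂ) := by rw [hh]
  calc ((2:ℂ)^J * (Nat.factorial J : ℂ))⁻¹ * ((J.choose M : ℂ) *
        (((2:ℂ)^M * (Nat.factorial M : ℂ)) * ((2:ℂ)^(J-M) * (Nat.factorial (J-M) : ℂ)) *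
          ∑ s ∈ (Finset.powersetCard (2*M) (Finset.univ : Finset (Fin (2*J)))).attach,
            pfSummand R C M s.1 ((Finset.mem_powersetCard.mp s.2).2)))
      = ((2:ℂ)^J * (Nat.factorial J : ℂ))⁻¹ * ((((J.choose M : ℕ) : ℂ) *
          ((2:ℂ)^M * (Nat.factorial M : ℂ)) * ((2:ℂ)^(J-M) * (Nat.factorial (J-M) : ℂ))) *
          ∑ s ∈ (Finset.powersetCard (2*M) (Finset.univ : Finset (Fin (2*J)))).attach,
            pfSummand R C M s.1 ((Finset.mem_powersetCard.mp s.2).2)) := by ring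
    _ = _ := by rw [hfac, inv_mul_cancel_left₀ hne]

end
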